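/- The degenerate r-Whitney numbers of the first kind satisfy the recurrence V_{m,λ}^{(r)}(n+1,k) = V_{m,λ}^{(r)}(n,k−1) + (kλ − r − mn) V_{m,λ}^{(r)}(n,k), for all n ≥ 0 and k ≥ 1 (with the convention V_{m,λ}^{(r)}(n,j) = 0 for j < 0 or j > n, and V_{m,λ}^{(r)}(0,0) = 1). -/

import Mathlib

open Finset

/-- generalized falling factorial: (x)_{n,λ} = x(x-λ)···(x-(n-1)λ) -/
def dff (lam x : ℝ) (n : ℕ) : ℝ := ∏ i ∈ Finset.range n, (x - i * lam)

/-- generalized rising factorial: ⟨x⟩_{n,λ} = x(x+λ)···(x+(n-1)λ) -/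
def drf (lam x : ℝ) (n : ℕ) : ℝ := ∏ i ∈ Finset.range n, (x + i * lam)

open Polynomial in
private lemma Qdeg (m : ℝ) (hm : m ≠ 0) (r lam : ℝ) (k : ℕ) :
    (∏ i ∈ range k, (C m * X + C (r - i * lam))).natDegree = k ∧
    (∏ i ∈ range k, (C m * X + C (r - i * lam))).leadingCoeff = m ^ k := by
  have hne : ∀ i : ℕ, (C m * X + C (r - i * lam)) ≠ 0 := by
    intro i h
    have := natDegree_linear (b := r - i * lam) hm
    rw [h] at this
    simp at this
  constructor
  · rw [natDegree_prod _ _ (fun i _ => hne i)]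
    simp only [natDegree_linear hm]
    simp
  · rw [leadingCoeff_prod]
    simp only [leadingCoeff_linear hm]
    simp

open Polynomial in
private lemma dff_eval (m r lam x : ℝ) (k : ℕ) :
    (∏ i ∈ range k, (C m * X + C (r - i * lam))).eval x = dff lam (m * x + r) k := by
  rw [eval_prod, dff]
  refine Finset.prod_congr rfl fun i _ => ?_
  simp; ring

open Polynomial in
private lemma coeffs_zero (m : ℝ) (hm : m ≠ 0) (r lam : ℝ) :
    ∀ N (c : ℕ → ℝ),
      (∑ k ∈ range (N + 1), C (c k) * ∏ i ∈ range k, (C m * X + C (r - i * lam))) = 0 →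
      ∀ k ≤ N, c k = 0 := by
  intro N
  induction N with
  | zero =>
    intro c h k hk
    interval_cases k
    simpa using congrArg (fun p => Polynomial.coeff p 0) h
  | succ N ih =>
    intro c h k hk
    have htop : c (N + 1) = 0 := by
      have h' := congrArg (fun p => Polynomial.coeff p (N + 1)) h
      simp only [finset_sum_coeff, coeff_C_mul, coeff_zero] at h'
      rw [Finset.sum_range_succ] at h'
      have h1 : ∀ j ∈ range (N + 1),
          c j * (∏ i ∈ range j, (C m * X + C (r - i * lam))).coeff (N + 1) = 0 := by
        intro j hj
        have : (∏ i ∈ range j, (C m * X + C (r - i * lam))).coeff (N + 1) = 0 :=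
          coeff_eq_zero_of_natDegree_lt (by rw [(Qdeg m hm r lam j).1]; exact mem_range.mp hj)
        rw [this, mul_zero]
      rw [Finset.sum_eq_zero h1, zero_add] at h'
      have hco : (∏ i ∈ range (N + 1), (C m * X + C (r - i * lam))).coeff (N + 1)
          = m ^ (N + 1) := by
        set p := ∏ i ∈ range (N + 1), (C m * X + C (r - i * lam)) with hp
        have h2 := (Qdeg m hm r lam (N + 1)).1
        have h3 := (Qdeg m hm r lam (N + 1)).2
        rw [← hp] at h2 h3
        rw [← h2, coeff_natDegree, h3, h2]
      rw [hco] at h'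
      have : (m : ℝ) ^ (N + 1) ≠ 0 := pow_ne_zero _ hm
      exact (mul_eq_zero.mp h').resolve_right this
    rcases Nat.lt_succ_iff_lt_or_eq.mp (Nat.lt_succ_of_le hk) with h' | h'
    · apply ih c _ k (Nat.lt_succ_iff.mp h')
      rw [Finset.sum_range_succ, htop] at h
      simpa using h
    · rw [h']; exact htop

private lemma dff_succ (lam x : ℝ) (n : ℕ) :
    dff lam x (n + 1) = dff lam x n * (x - n * lam) := Finset.prod_range_succ _ _

theorem stmt8 (m : ℕ) (hm : 0 < m) (r : ℕ) (lam : ℝ) (V : ℕ → ℕ → ℝ)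
    (hV : ∀ n : ℕ, ∀ x : ℝ,
      (m : ℝ) ^ n * dff 1 x n = ∑ k ∈ range (n + 1), V n k * dff lam ((m : ℝ) * x + r) k)
    (hzero : ∀ n k : ℕ, n < k → V n k = 0)
    (hV00 : V 0 0 = 1) :
    ∀ n k : ℕ, 1 ≤ k →
      V (n + 1) k = V n (k - 1) + ((k : ℝ) * lam - r - m * n) * V n k := by
  intro n k hk
  set W : ℕ → ℝ := fun j =>
    (if j = 0 then 0 else V n (j - 1)) + ((j : ℝ) * lam - r - m * n) * V n j with hWdef
  have key : ∀ x : ℝ, ∑ j ∈ range (n + 2), (V (n + 1) j - W j) * dff lam ((m : ℝ) * x + r) j = 0 := by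
    intro x
    have hA : ∑ j ∈ range (n + 2), W j * dff lam ((m : ℝ) * x + r) j
        = (m : ℝ) ^ (n + 1) * dff 1 x (n + 1) := by
      have hsplit : ∑ j ∈ range (n + 2), W j * dff lam ((m : ℝ) * x + r) j
          = (∑ j ∈ range (n + 2), (if j = 0 then 0 else V n (j - 1)) * dff lam ((m:ℝ)*x + r) j)
          + ∑ j ∈ range (n + 2), ((j : ℝ) * lam - r - m * n) * V n j * dff lam ((m:ℝ)*x + r) j := by
        rw [← Finset.sum_add_distrib]
        refine Finset.sum_congr rfl fun j _ => ?_
        simp only [hWdef]; ring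
      rw [hsplit]
      have hfirst : (∑ j ∈ range (n + 2),
          (if j = 0 then 0 else V n (j - 1)) * dff lam ((m:ℝ)*x + r) j)
          = ∑ i ∈ range (n + 1), V n i * dff lam ((m:ℝ)*x + r) (i + 1) := by
        rw [Finset.sum_range_succ']
        simp
      have hsecond : (∑ j ∈ range (n + 2),
          ((j : ℝ) * lam - r - m * n) * V n j * dff lam ((m:ℝ)*x + r) j)
          = ∑ j ∈ range (n + 1), ((j : ℝ) * lam - r - m * n) * V n j * dff lam ((m:ℝ)*x + r) j := by
        rw [Finset.sum_range_succ, hzero n (n + 1) (Nat.lt_succ_self n)]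
        ring
      rw [hfirst, hsecond, ← Finset.sum_add_distrib]
      have hterm : ∀ j ∈ range (n + 1),
          V n j * dff lam ((m:ℝ)*x + r) (j + 1)
          + ((j : ℝ) * lam - r - m * n) * V n j * dff lam ((m:ℝ)*x + r) j
          = (V n j * dff lam ((m:ℝ)*x + r) j) * ((m : ℝ) * x - m * n) := by
        intro j _
        rw [dff_succ]
        ring
      rw [Finset.sum_congr rfl hterm, ← Finset.sum_mul, ← hV n x, dff_succ]
      ring
    have h1 := hV (n + 1) x
    calc ∑ j ∈ range (n + 2), (V (n + 1) j - W j) * dff lam ((m : ℝ) * x + r) j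
        = (∑ j ∈ range (n + 2), V (n + 1) j * dff lam ((m : ℝ) * x + r) j)
          - ∑ j ∈ range (n + 2), W j * dff lam ((m : ℝ) * x + r) j := by
          rw [← Finset.sum_sub_distrib]
          refine Finset.sum_congr rfl fun j _ => ?_
          ring
      _ = 0 := by rw [hA, ← h1]; ring
  -- polynomial step
  have hmne : (m : ℝ) ≠ 0 := Nat.cast_ne_zero.mpr hm.ne'
  have hP : (∑ j ∈ range (n + 2), Polynomial.C (V (n + 1) j - W j) *
      ∏ i ∈ range j, (Polynomial.C (m : ℝ) * Polynomial.X + Polynomial.C ((r : ℝ) - i * lam))) = 0 := by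
    apply Polynomial.funext
    intro x
    rw [Polynomial.eval_zero, Polynomial.eval_finset_sum]
    rw [← key x]
    refine Finset.sum_congr rfl fun j _ => ?_
    rw [Polynomial.eval_mul, Polynomial.eval_C, dff_eval]
  have hcz := coeffs_zero (m : ℝ) hmne (r : ℝ) lam (n + 1) _ hP
  by_cases hkn : k ≤ n + 1
  · have := hcz k hkn
    have hVW : V (n + 1) k = W k := by linarith [this]
    rw [hVW]
    simp only [hWdef]
    rw [if_neg (by omega : ¬ k = 0)]
  · push_neg at hkn
    rw [hzero (n + 1) k hkn, hzero n k (by omega), hzero n (k - 1) (by omega)]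
    ring
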